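/- The strong odd chromatic number of I_y(G_8, G_8) equals 17. -/

import Mathlib

open SimpleGraph

/-- A coloring `φ` of the vertices of `G` is a strong odd coloring if it is proper and,
for every vertex `v` and every color `c`, the number of neighbors of `v` colored `c`
is either zero or odd. -/
def IsStrongOddColoring {V α : Type*} (G : SimpleGraph V) (φ : V → α) : Prop :=
  (∀ u v : V, G.Adj u v → φ u ≠ φ v) ∧
  ∀ (v : V) (c : α),
    {u : V | G.Adj v u ∧ φ u = c}.ncard = 0 ∨ Odd {u : V | G.Adj v u ∧ φ u = c}.ncard

/-- The strong odd chromatic number: the least `k` such that `G` admits a strong odd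
coloring with `k` colors. -/
noncomputable def strongOddChromaticNumber {V : Type*} (G : SimpleGraph V) : ℕ :=
  sInf {k : ℕ | ∃ φ : V → Fin k, IsStrongOddColoring G φ}

/-- The join `G ∨ H` of two graphs: disjoint copies of `G` and `H` together with all
edges between them. -/
def joinGraph {V W : Type*} (G : SimpleGraph V) (H : SimpleGraph W) :
    SimpleGraph (V ⊕ W) where
  Adj x y :=
    match x, y with
    | Sum.inl a, Sum.inl b => G.Adj a b
    | Sum.inl _, Sum.inr _ => True
    | Sum.inr _, Sum.inl _ => True
    | Sum.inr a, Sum.inr b => H.Adj a b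
  symm := ⟨by rintro (a | a) (b | b) h <;> first | exact h.symm | trivial⟩
  loopless := ⟨by rintro (a | a) h <;> first | exact G.irrefl h | exact H.irrefl h⟩

/-- The wheel graph `W_n = C_n ∨ K_1`. -/
def wheelGraph (n : ℕ) : SimpleGraph (Fin n ⊕ Fin 1) :=
  joinGraph (cycleGraph n) (⊥ : SimpleGraph (Fin 1))

/-- `G_n = C_n ∨ K̄_2`; the two vertices of `K̄_2` are `x_n = Sum.inr 0` and
`y_n = Sum.inr 1`. -/
def cycleJoinTwo (n : ℕ) : SimpleGraph (Fin n ⊕ Fin 2) :=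
  joinGraph (cycleGraph n) (⊥ : SimpleGraph (Fin 2))

/-- The one point union of graphs `G` and `H`, obtained by identifying the vertex
`a` of `G` with the vertex `b` of `H` (the identified vertex is `Sum.inl a`). -/
def onePointUnion {V W : Type*} (G : SimpleGraph V) (H : SimpleGraph W) (a : V) (b : W) :
    SimpleGraph (V ⊕ {w : W // w ≠ b}) where
  Adj x y :=
    match x, y with
    | Sum.inl u, Sum.inl v => G.Adj u v
    | Sum.inl u, Sum.inr v => u = a ∧ H.Adj b v.1
    | Sum.inr v, Sum.inl u => u = a ∧ H.Adj b v.1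
    | Sum.inr u, Sum.inr v => H.Adj u.1 v.1
  symm := ⟨by
    rintro (u | u) (v | v) h
    · exact h.symm
    · exact h
    · exact h
    · exact h.symm⟩
  loopless := ⟨by
    rintro (u | u) h
    · exact G.irrefl h
    · exact H.irrefl h⟩

/-- `I_y(G_m, G_n)`: the one point union of `G_m = C_m ∨ K̄_2` and `G_n = C_n ∨ K̄_2`
obtained by identifying the vertices `y_m` and `y_n`. -/
def Iy (m n : ℕ) :
    SimpleGraph ((Fin m ⊕ Fin 2) ⊕ {w : Fin n ⊕ Fin 2 // w ≠ Sum.inr 1}) :=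
  onePointUnion (cycleJoinTwo m) (cycleJoinTwo n) (Sum.inr 1) (Sum.inr 1)

/-- A planar embedding of a graph `G`: an injective placement of the vertices in the
plane together with, for each edge, an arc (injective path) joining the images of its
endpoints, such that arcs do not pass through images of other vertices and two arcs of
distinct edges meet only in common endpoints. -/
structure PlanarEmbedding {V : Type*} (G : SimpleGraph V) where
  vmap : V → ℝ × ℝ
  vmap_inj : Function.Injective vmap
  arc : ∀ u v : V, G.Adj u v → Path (vmap u) (vmap v)
  arc_symm : ∀ (u v : V) (h : G.Adj u v), arc v u h.symm = (arc u v h).symm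
  arc_inj : ∀ (u v : V) (h : G.Adj u v), Function.Injective (arc u v h)
  arc_vertex : ∀ (u v : V) (h : G.Adj u v) (w : V),
    vmap w ∈ Set.range (arc u v h) → w = u ∨ w = v
  arc_disjoint : ∀ (u v u' v' : V) (h : G.Adj u v) (h' : G.Adj u' v'),
    s(u, v) ≠ s(u', v') →
    Set.range (arc u v h) ∩ Set.range (arc u' v' h') ⊆
      ({vmap u, vmap v} ∩ {vmap u', vmap v'} : Set (ℝ × ℝ))

/-- A graph is planar if it admits a planar embedding. -/
def IsPlanar {V : Type*} (G : SimpleGraph V) : Prop :=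
  Nonempty (PlanarEmbedding G)

-- test snippet appended to defs
section Aux
open Finset

abbrev V19 := (Fin 8 ⊕ Fin 2) ⊕ {w : Fin 8 ⊕ Fin 2 // w ≠ Sum.inr 1}

instance decJoin {V W : Type*} (G : SimpleGraph V) (H : SimpleGraph W)
    [DecidableRel G.Adj] [DecidableRel H.Adj] : DecidableRel (joinGraph G H).Adj := fun x y =>
  match x, y with
  | Sum.inl a, Sum.inl b => inferInstanceAs (Decidable (G.Adj a b))
  | Sum.inl _, Sum.inr _ => .isTrue trivial
  | Sum.inr _, Sum.inl _ => .isTrue trivial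
  | Sum.inr a, Sum.inr b => inferInstanceAs (Decidable (H.Adj a b))

instance decCJT (n : ℕ) : DecidableRel (cycleJoinTwo n).Adj :=
  inferInstanceAs (DecidableRel (joinGraph _ _).Adj)

instance decOPU {V W : Type*} (G : SimpleGraph V) (H : SimpleGraph W) (a : V) (b : W)
    [DecidableEq V] [DecidableRel G.Adj] [DecidableRel H.Adj] :
    DecidableRel (onePointUnion G H a b).Adj := fun x y =>
  match x, y with
  | Sum.inl u, Sum.inl v => inferInstanceAs (Decidable (G.Adj u v))
  | Sum.inl u, Sum.inr v => inferInstanceAs (Decidable (u = a ∧ H.Adj b v.1))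
  | Sum.inr v, Sum.inl u => inferInstanceAs (Decidable (u = a ∧ H.Adj b v.1))
  | Sum.inr u, Sum.inr v => inferInstanceAs (Decidable (H.Adj u.1 v.1))

instance decIy : DecidableRel (Iy 8 8).Adj :=
  inferInstanceAs (DecidableRel (onePointUnion _ _ _ _).Adj)

def vm (i : Fin 8) : V19 := Sum.inl (Sum.inl i)
def xm : V19 := Sum.inl (Sum.inr 0)
def yv : V19 := Sum.inl (Sum.inr 1)
def vn (j : Fin 8) : V19 := Sum.inr ⟨Sum.inl j, by simp⟩
def xn : V19 := Sum.inr ⟨Sum.inr 0, by simp⟩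

example : ∀ u : V19, (Iy 8 8).Adj yv u ↔ (∃ i, u = vm i) ∨ (∃ j, u = vn j) := by decide

example : ∀ (i : Fin 8) (u : V19), (Iy 8 8).Adj (vm (i+1)) u ↔
    (u = vm i ∨ u = vm (i+2) ∨ u = xm ∨ u = yv) := by decide
end Aux
section Aux2
open Finset

lemma ncard_filter {V : Type*} [Fintype V] [DecidableEq V] (p : V → Prop) [DecidablePred p] :
    {u : V | p u}.ncard = (Finset.univ.filter p).card := by
  rw [Set.ncard_eq_toFinset_card']
  simp [Set.toFinset_setOf]

lemma isStrongOdd_iff {V α : Type*} [Fintype V] [DecidableEq V] (G : SimpleGraph V)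
    [DecidableRel G.Adj] (φ : V → α) [DecidableEq α] :
    IsStrongOddColoring G φ ↔ ((∀ u v, G.Adj u v → φ u ≠ φ v) ∧
      ∀ v c, (Finset.univ.filter fun u => G.Adj v u ∧ φ u = c).card = 0 ∨
        Odd (Finset.univ.filter fun u => G.Adj v u ∧ φ u = c).card) := by
  unfold IsStrongOddColoring
  simp only [ncard_filter]

def φ0 : V19 → Fin 17
  | .inl (.inl i) => ⟨i, by omega⟩
  | .inl (.inr 0) => ⟨8, by omega⟩
  | .inl (.inr 1) => ⟨16, by omega⟩
  | .inr ⟨.inl j, _⟩ => ⟨8 + j, by omega⟩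
  | .inr ⟨.inr _, _⟩ => ⟨0, by omega⟩

lemma upper : IsStrongOddColoring (Iy 8 8) φ0 := by
  rw [isStrongOdd_iff]
  decide
end Aux2
section Aux3
open Finset

variable {V α : Type*} [Fintype V] [DecidableEq V] {G : SimpleGraph V} [DecidableRel G.Adj]
  {φ : V → α}

lemma lemA (h : IsStrongOddColoring G φ) {v a b : V} (ha : G.Adj v a) (hb : G.Adj v b)
    (hab : a ≠ b) (hc : φ a = φ b)
    (hall : ∀ w, G.Adj v w → φ w = φ b → w = a ∨ w = b) : False := by
  classical
  have h2 := h.2 v (φ b)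
  rw [ncard_filter] at h2
  have hs : (Finset.univ.filter fun u => G.Adj v u ∧ φ u = φ b) = {a, b} := by
    ext w
    simp only [Finset.mem_filter, Finset.mem_univ, true_and, Finset.mem_insert,
      Finset.mem_singleton]
    constructor
    · rintro ⟨h1, h2⟩; exact hall w h1 h2
    · rintro (rfl | rfl)
      · exact ⟨ha, hc⟩
      · exact ⟨hb, rfl⟩
  rw [hs, Finset.card_insert_of_notMem (by simpa using hab), Finset.card_singleton] at h2
  rcases h2 with h2 | h2
  · omega
  · exact (Nat.not_odd_iff_even.mpr (by decide)) h2

lemma lemB (h : IsStrongOddColoring G φ) {v a b : V} (ha : G.Adj v a) (hb : G.Adj v b)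
    (hab : a ≠ b) (hc : φ a = φ b) :
    ∃ w, G.Adj v w ∧ φ w = φ b ∧ w ≠ a ∧ w ≠ b := by
  by_contra hcon
  push_neg at hcon
  refine lemA h ha hb hab hc fun w hw hwc => ?_
  by_cases h1 : w = a
  · exact Or.inl h1
  · exact Or.inr (by by_contra h2; exact h2 (hcon w hw hwc h1))

end Aux3

section Aux4

variable {α : Type*} {φ : V19 → α}

lemma pigeon : ∀ a b d : Fin 8, a ≠ b → a ≠ d → b ≠ d →
    ∃ p q : Fin 8, (p = a ∨ p = b ∨ p = d) ∧ (q = a ∨ q = b ∨ q = d) ∧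
      (q = p + 1 ∨ q = p + 2) := by decide

lemma cycle_inj (h : IsStrongOddColoring (Iy 8 8) φ) (emb : Fin 8 → V19) (x : V19)
    (hinj : Function.Injective emb)
    (hx : ∀ u, (Iy 8 8).Adj x u ↔ ∃ i, u = emb i)
    (hnb : ∀ (i : Fin 8) (u : V19), (Iy 8 8).Adj (emb (i+1)) u ↔
      (u = emb i ∨ u = emb (i+2) ∨ u = x ∨ u = yv))
    (hy : ∀ i, (Iy 8 8).Adj yv (emb i)) :
    ∀ a b : Fin 8, a ≠ b → φ (emb a) ≠ φ (emb b) := by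
  have d1 : ∀ p : Fin 8, p - 1 + 1 = p := by decide
  have d2 : ∀ p : Fin 8, p - 1 + 2 = p + 1 := by decide
  have d4 : ∀ p : Fin 8, p ≠ p + 2 := by decide
  have key : ∀ p q : Fin 8, (q = p + 1 ∨ q = p + 2) → φ (emb p) = φ (emb q) → False := by
    rintro p q (rfl | rfl) hcol
    · have hadj : (Iy 8 8).Adj (emb (p - 1 + 1)) (emb (p - 1 + 2)) :=
        (hnb (p-1) (emb (p-1+2))).mpr (Or.inr (Or.inl rfl))
      rw [d1, d2] at hadj
      exact h.1 _ _ hadj hcol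
    · refine lemA h (v := emb (p+1)) (a := emb p) (b := emb (p+2))
        ((hnb p _).mpr (Or.inl rfl)) ((hnb p _).mpr (Or.inr (Or.inl rfl)))
        (fun e => d4 p (hinj e)) hcol ?_
      intro w hw hwc
      rcases (hnb p w).mp hw with rfl | rfl | rfl | rfl
      · exact Or.inl rfl
      · exact Or.inr rfl
      · exact absurd hwc (h.1 w (emb (p+2)) ((hx _).mpr ⟨p+2, rfl⟩))
      · exact absurd hwc (h.1 yv (emb (p+2)) (hy (p+2)))
  intro a b hab hcc
  obtain ⟨w, hw, hwc, hwa, hwb⟩ := lemB h (v := x) ((hx _).mpr ⟨a, rfl⟩)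
    ((hx _).mpr ⟨b, rfl⟩) (fun e => hab (hinj e)) hcc
  obtain ⟨d, rfl⟩ := (hx w).mp hw
  have hda : a ≠ d := fun e => hwa (congrArg emb e.symm)
  have hdb : b ≠ d := fun e => hwb (congrArg emb e.symm)
  obtain ⟨p, q, hp, hq, hpq⟩ := pigeon a b d hab hda hdb
  have hcol : ∀ r : Fin 8, (r = a ∨ r = b ∨ r = d) → φ (emb r) = φ (emb b) := by
    rintro r (rfl | rfl | rfl)
    · exact hcc
    · rfl
    · exact hwc
  exact key p q hpq ((hcol p hp).trans (hcol q hq).symm)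

end Aux4
section Aux5

variable {α : Type*} {φ : V19 → α}

lemma vm_inj : Function.Injective vm := by
  intro i j e; simpa [vm] using e

lemma vn_inj : Function.Injective vn := by
  intro i j e; simpa [vn] using e

lemma hx_m : ∀ u, (Iy 8 8).Adj xm u ↔ ∃ i, u = vm i := by decide
lemma hx_n : ∀ u, (Iy 8 8).Adj xn u ↔ ∃ i, u = vn i := by decide
lemma hnb_m : ∀ (i : Fin 8) (u : V19), (Iy 8 8).Adj (vm (i+1)) u ↔
    (u = vm i ∨ u = vm (i+2) ∨ u = xm ∨ u = yv) := by decide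
lemma hnb_n : ∀ (i : Fin 8) (u : V19), (Iy 8 8).Adj (vn (i+1)) u ↔
    (u = vn i ∨ u = vn (i+2) ∨ u = xn ∨ u = yv) := by decide
lemma hy_m : ∀ i, (Iy 8 8).Adj yv (vm i) := by decide
lemma hy_n : ∀ i, (Iy 8 8).Adj yv (vn i) := by decide
lemma hy_all : ∀ u, (Iy 8 8).Adj yv u ↔ (∃ i, u = vm i) ∨ (∃ j, u = vn j) := by decide

lemma inj_m (h : IsStrongOddColoring (Iy 8 8) φ) :
    ∀ a b : Fin 8, a ≠ b → φ (vm a) ≠ φ (vm b) :=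
  cycle_inj h vm xm vm_inj hx_m hnb_m hy_m

lemma inj_n (h : IsStrongOddColoring (Iy 8 8) φ) :
    ∀ a b : Fin 8, a ≠ b → φ (vn a) ≠ φ (vn b) :=
  cycle_inj h vn xn vn_inj hx_n hnb_n hy_n

lemma inj_cross (h : IsStrongOddColoring (Iy 8 8) φ) :
    ∀ a b : Fin 8, φ (vm a) ≠ φ (vn b) := by
  intro a b hcc
  have hne : vm a ≠ vn b := by simp [vm, vn]
  obtain ⟨w, hw, hwc, hwa, hwb⟩ := lemB h (v := yv) (hy_m a) (hy_n b) hne hcc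
  rcases (hy_all w).mp hw with ⟨i, rfl⟩ | ⟨j, rfl⟩
  · have : i ≠ a := fun e => hwa (congrArg vm e)
    exact inj_m h i a this (hwc.trans hcc.symm)
  · have : j ≠ b := fun e => hwb (congrArg vn e)
    exact inj_n h j b this hwc

lemma inj_y_m (h : IsStrongOddColoring (Iy 8 8) φ) : ∀ a : Fin 8, φ yv ≠ φ (vm a) :=
  fun a => h.1 yv (vm a) (hy_m a)

lemma inj_y_n (h : IsStrongOddColoring (Iy 8 8) φ) : ∀ a : Fin 8, φ yv ≠ φ (vn a) :=
  fun a => h.1 yv (vn a) (hy_n a)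

/-- the 17 vertices that must receive pairwise distinct colors -/
def f17 : Fin 17 → V19 := fun t =>
  if h8 : (t : ℕ) < 8 then vm ⟨t, h8⟩
  else if h16 : (t : ℕ) < 16 then vn ⟨(t : ℕ) - 8, by omega⟩
  else yv

lemma lower (k : ℕ) (φ : V19 → Fin k) (h : IsStrongOddColoring (Iy 8 8) φ) : 17 ≤ k := by
  have hinj : Function.Injective (fun t => φ (f17 t)) := by
    intro s t hst
    by_contra hne
    have key : ∀ s t : Fin 17, s ≠ t → (s : ℕ) ≤ (t : ℕ) → φ (f17 s) ≠ φ (f17 t) := by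
      intro s t hst hle
      unfold f17
      have hv : (s : ℕ) < (t : ℕ) := by
        rcases lt_or_eq_of_le hle with h' | h'
        · exact h'
        · exact absurd (Fin.ext h') hst
      by_cases hs8 : (s : ℕ) < 8
      · rw [dif_pos hs8]
        by_cases ht8 : (t : ℕ) < 8
        · rw [dif_pos ht8]
          exact inj_m h _ _ (by simp [Fin.ext_iff]; omega)
        · rw [dif_neg ht8]
          by_cases ht16 : (t : ℕ) < 16
          · rw [dif_pos ht16]; exact inj_cross h _ _
          · rw [dif_neg ht16]; exact fun e => inj_y_m h _ e.symm
      · rw [dif_neg hs8]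
        have ht8 : ¬ (t : ℕ) < 8 := by omega
        by_cases hs16 : (s : ℕ) < 16
        · rw [dif_pos hs16]
          by_cases ht16 : (t : ℕ) < 16
          · rw [dif_neg ht8, dif_pos ht16]
            exact inj_n h _ _ (by simp [Fin.ext_iff]; omega)
          · rw [dif_neg ht8, dif_neg ht16]
            exact fun e => inj_y_n h _ e.symm
        · exfalso
          have ht16 : ¬ (t : ℕ) < 16 := by omega
          have : (s : ℕ) = 16 := by omega
          have : (t : ℕ) = 16 := by omega
          omega
    rcases le_total (s : ℕ) (t : ℕ) with hle | hle
    · exact key s t hne hle hst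
    · exact key t s (Ne.symm hne) hle hst.symm
  have := Fintype.card_le_of_injective _ hinj
  simpa using this

end Aux5

/-- The strong odd chromatic number of `I_y(G_8, G_8)` equals `17`. -/
theorem stmt_14 : strongOddChromaticNumber (Iy 8 8) = 17 := by
  unfold strongOddChromaticNumber
  have hmem : 17 ∈ {k : ℕ | ∃ φ : V19 → Fin k, IsStrongOddColoring (Iy 8 8) φ} := ⟨φ0, upper⟩
  apply le_antisymm
  · exact Nat.sInf_le hmem
  · exact le_csInf ⟨17, hmem⟩ (by rintro k ⟨ψ, hψ⟩; exact lower k ψ hψ)
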